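/- There exist constants c₁, c₂ > 0, depending only on α and d, such that for every x ∈ ℤ^d and every real r ≥ 1 one has c₁ · r^d · (max(|x|, r))^α ≤ V(x,r) ≤ c₂ · r^d · (max(|x|, r))^α. -/

import Mathlib

open scoped BigOperators

/-- ℓ∞ norm on ℤ^d, as a natural number. -/
def linf {d : ℕ} (x : Fin d → ℤ) : ℕ :=
  Finset.univ.sup fun i => (x i).natAbs

/-- ℓ¹ norm on ℤ^d, as a natural number. -/
def l1 {d : ℕ} (x : Fin d → ℤ) : ℕ :=
  ∑ i, (x i).natAbs

/-- `ν x = (max(|x|,1))^α`. -/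
noncomputable def nu (α : ℝ) {d : ℕ} (x : Fin d → ℤ) : ℝ :=
  ((max (linf x) 1 : ℕ) : ℝ) ^ α

/-- The conductance `μ x y = (max(|x|,|y|))^(-α)` if `|x-y|₁ = 1`, and `0` otherwise. -/
noncomputable def mu (α : ℝ) {d : ℕ} (x y : Fin d → ℤ) : ℝ :=
  if l1 (x - y) = 1 then ((max (linf x) (linf y) : ℕ) : ℝ) ^ (-α) else 0

/-- `z 0, …, z m` is a path: consecutive points are at ℓ¹-distance one. -/
def IsPath {d : ℕ} (z : ℕ → Fin d → ℤ) (m : ℕ) : Prop :=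
  ∀ i < m, l1 (z (i + 1) - z i) = 1

/-- The metric `ρ(x,y)`: `0` if `x = y`, otherwise the infimum of `∑ ν (z i)` over
paths from `x` to `y`. -/
noncomputable def rho (α : ℝ) {d : ℕ} (x y : Fin d → ℤ) : ℝ :=
  if x = y then 0
  else sInf {S : ℝ | ∃ (m : ℕ) (z : ℕ → Fin d → ℤ), IsPath z m ∧ z 0 = x ∧ z m = y ∧
    S = ∑ i ∈ Finset.range (m + 1), nu α (z i)}

/-- `ρ_x(r) = (max(|x|,r))^α · r`. -/
noncomputable def rhox (α : ℝ) {d : ℕ} (x : Fin d → ℤ) (r : ℝ) : ℝ :=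
  (max ((linf x : ℕ) : ℝ) r) ^ α * r

/-- `ρ_x⁻¹(r) = (max(|x|, r^{1/(1+α)}))^{-α} · r`, the inverse function of `ρ_x`. -/
noncomputable def rhoxInv (α : ℝ) {d : ℕ} (x : Fin d → ℤ) (r : ℝ) : ℝ :=
  (max ((linf x : ℕ) : ℝ) (r ^ (1 / (1 + α)))) ^ (-α) * r

/-- `V(x,r) = ν(B(x,r))`, the ν-volume of the ℓ∞-ball of radius `r` about `x`. -/
noncomputable def V (α : ℝ) {d : ℕ} (x : Fin d → ℤ) (r : ℝ) : ℝ :=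
  ∑' y : {y : Fin d → ℤ // ((linf (y - x) : ℕ) : ℝ) ≤ r}, nu α y.1

/-- `V_ρ(x,r) = ν(B_ρ(x,r))`, the ν-volume of the ρ-ball of radius `r` about `x`. -/
noncomputable def Vrho (α : ℝ) {d : ℕ} (x : Fin d → ℤ) (r : ℝ) : ℝ :=
  ∑' y : {y : Fin d → ℤ // rho α x y ≤ r}, nu α y.1

section Aux

open Finset Real

variable {d : ℕ}

lemma natAbs_le_linf (x : Fin d → ℤ) (i : Fin d) : (x i).natAbs ≤ linf x :=
  Finset.le_sup (f := fun i => (x i).natAbs) (Finset.mem_univ i)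

lemma linf_le_iff {x : Fin d → ℤ} {n : ℕ} : linf x ≤ n ↔ ∀ i, (x i).natAbs ≤ n := by
  simp [linf, Finset.sup_le_iff]

lemma linf_add_le (a b : Fin d → ℤ) : linf (a + b) ≤ linf a + linf b := by
  rw [linf_le_iff]
  intro i
  have h1 := natAbs_le_linf a i
  have h2 := natAbs_le_linf b i
  simp only [Pi.add_apply]
  omega

lemma linf_neg (a : Fin d → ℤ) : linf (-a) = linf a := by
  simp [linf, Int.natAbs_neg]

lemma nu_nonneg (α : ℝ) (y : Fin d → ℤ) : 0 ≤ nu α y :=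
  Real.rpow_nonneg (by positivity) _

/-- The cube of radius `n` about `x`, as a finset. -/
noncomputable def cube (x : Fin d → ℤ) (n : ℕ) : Finset (Fin d → ℤ) :=
  Fintype.piFinset fun i => Finset.Icc (x i - n) (x i + n)

lemma mem_cube {x y : Fin d → ℤ} {n : ℕ} : y ∈ cube x n ↔ linf (y - x) ≤ n := by
  simp only [cube, Fintype.mem_piFinset, Finset.mem_Icc, linf_le_iff, Pi.sub_apply]
  exact (forall_congr' fun i => by omega)

lemma card_cube (x : Fin d → ℤ) (n : ℕ) : (cube x n).card = (2 * n + 1) ^ d := by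
  rw [cube, Fintype.card_piFinset]
  rw [Finset.prod_congr rfl fun i _ => show (Finset.Icc (x i - n) (x i + n)).card = 2 * n + 1 by
    rw [Int.card_Icc]; omega]
  rw [Finset.prod_const, Finset.card_univ, Fintype.card_fin]

lemma V_eq_sum (α : ℝ) (x : Fin d → ℤ) (r : ℝ) (hr : 0 ≤ r) :
    V α x r = ∑ y ∈ cube x ⌊r⌋₊, nu α y := by
  have hset : {y : Fin d → ℤ | ((linf (y - x) : ℕ) : ℝ) ≤ r} = ↑(cube x ⌊r⌋₊) := by
    ext y
    simp only [Set.mem_setOf_eq, Finset.mem_coe, mem_cube]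
    exact (Nat.le_floor_iff hr).symm
  calc V α x r
      = ∑' y : ({y : Fin d → ℤ | ((linf (y - x) : ℕ) : ℝ) ≤ r} : Set _), nu α y.1 := rfl
    _ = ∑' y : ((cube x ⌊r⌋₊ : Finset _) : Set _), nu α y.1 := tsum_congr_set_coe _ hset
    _ = ∑ y ∈ cube x ⌊r⌋₊, nu α y := Finset.tsum_subtype' (cube x ⌊r⌋₊) (nu α)

lemma sum_succ_rpow_le {α : ℝ} (hα1 : -1 < α) (hα0 : α ≤ 0) (N : ℕ) :
    ∑ i ∈ Finset.range N, ((i + 1 : ℕ) : ℝ) ^ α ≤ (N : ℝ) ^ (1 + α) / (1 + α) := by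
  have h1α : (0:ℝ) < 1 + α := by linarith
  rw [le_div_iff₀ h1α]
  have key : ∀ i : ℕ, ((i + 1 : ℕ) : ℝ) ^ α * (1 + α) ≤
      ((i + 1 : ℕ) : ℝ) ^ (1 + α) - ((i : ℕ) : ℝ) ^ (1 + α) := by
    intro i
    have ht1 : (1:ℝ) ≤ ((i + 1 : ℕ) : ℝ) := by exact_mod_cast Nat.one_le_iff_ne_zero.2 (by omega)
    set t : ℝ := ((i + 1 : ℕ) : ℝ) with ht
    have ht0 : (0:ℝ) < t := by linarith
    have hinv : 1 / t ≤ 1 := by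
      rw [div_le_one ht0]; linarith
    have hinv0 : 0 < 1 / t := by positivity
    have hs : -(1:ℝ) ≤ -(1 / t) := by linarith
    have hbern := rpow_one_add_le_one_add_mul_self (s := -(1/t)) hs
      (p := 1 + α) (by linarith) (by linarith)
    have harg : (0:ℝ) ≤ 1 + -(1/t) := by linarith
    have hit : ((i : ℕ) : ℝ) = t * (1 + -(1/t)) := by
      have : t ≠ 0 := ne_of_gt ht0
      field_simp
      push_cast [ht]
      ring
    have h2 : ((i : ℕ) : ℝ) ^ (1+α) = t ^ (1+α) * (1 + -(1/t)) ^ (1+α) := by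
      rw [hit, Real.mul_rpow ht0.le harg]
    have h3 : ((i : ℕ) : ℝ) ^ (1+α) ≤ t ^ (1+α) * (1 + (1+α) * -(1/t)) := by
      rw [h2]
      exact mul_le_mul_of_nonneg_left hbern (Real.rpow_nonneg ht0.le _)
    have h4 : t ^ (1+α) * (1/t) = t ^ α := by
      rw [Real.rpow_add ht0, Real.rpow_one]
      field_simp
    nlinarith [h3, h4, Real.rpow_nonneg ht0.le (1+α)]
  calc (∑ i ∈ Finset.range N, ((i + 1 : ℕ) : ℝ) ^ α) * (1 + α)
      = ∑ i ∈ Finset.range N, ((i + 1 : ℕ) : ℝ) ^ α * (1 + α) := by rw [Finset.sum_mul]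
    _ ≤ ∑ i ∈ Finset.range N, (((i + 1 : ℕ) : ℝ) ^ (1+α) - ((i : ℕ) : ℝ) ^ (1+α)) :=
        Finset.sum_le_sum fun i _ => key i
    _ = ((N : ℕ) : ℝ) ^ (1+α) - ((0 : ℕ) : ℝ) ^ (1+α) :=
        Finset.sum_range_sub (fun k => ((k : ℕ) : ℝ) ^ (1+α)) N
    _ ≤ (N : ℝ) ^ (1+α) := by
        rw [Nat.cast_zero, Real.zero_rpow (ne_of_gt h1α)]
        simp

lemma sum_g_Icc_le {α : ℝ} (hα1 : -1 < α) (hα0 : α ≤ 0) (N : ℕ) (hN : 1 ≤ N) :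
    ∑ j ∈ Finset.Icc (-(N:ℤ)) (N:ℤ), ((max (j.natAbs) 1 : ℕ) : ℝ) ^ α
      ≤ (1 + 2 / (1+α)) * (N:ℝ) ^ (1+α) := by
  have h1α : (0:ℝ) < 1 + α := by linarith
  set g : ℤ → ℝ := fun j => ((max (j.natAbs) 1 : ℕ) : ℝ) ^ α with hg
  have hsplit : Finset.Icc (-(N:ℤ)) (N:ℤ) = Finset.Icc (-(N:ℤ)) (-1) ∪ Finset.Icc 0 (N:ℤ) := by
    ext j; simp only [Finset.mem_Icc, Finset.mem_union]; omega
  have hdisj : Disjoint (Finset.Icc (-(N:ℤ)) (-1)) (Finset.Icc (0:ℤ) (N:ℤ)) := by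
    rw [Finset.disjoint_left]
    intro a ha hb
    rw [Finset.mem_Icc] at ha hb
    omega
  have hneg : ∑ j ∈ Finset.Icc (-(N:ℤ)) (-1), g j
      = ∑ i ∈ Finset.range N, g ((i:ℤ)+1) := by
    refine Finset.sum_nbij' (fun j => (-j - 1).toNat) (fun i => -(i:ℤ) - 1) ?_ ?_ ?_ ?_ ?_
    · intro j hj
      rw [Finset.mem_Icc] at hj
      rw [Finset.mem_range]
      omega
    · intro i hi
      rw [Finset.mem_range] at hi
      rw [Finset.mem_Icc]
      omega
    · intro j hj
      rw [Finset.mem_Icc] at hj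
      omega
    · intro i hi
      rw [Finset.mem_range] at hi
      omega
    · intro j hj
      rw [Finset.mem_Icc] at hj
      have h1 : (((-j - 1).toNat : ℤ) + 1) = -j := by omega
      rw [h1, hg]
      simp [Int.natAbs_neg]
  have hpos : ∑ j ∈ Finset.Icc (0:ℤ) (N:ℤ), g j
      = ∑ i ∈ Finset.range (N+1), g (i:ℤ) := by
    refine (Finset.sum_nbij' (fun i => ((i:ℕ):ℤ)) (fun j => j.toNat) ?_ ?_ ?_ ?_ ?_).symm
    · intro i hi
      rw [Finset.mem_range] at hi
      rw [Finset.mem_Icc]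
      omega
    · intro j hj
      rw [Finset.mem_Icc] at hj
      rw [Finset.mem_range]
      omega
    · intro i _; omega
    · intro j hj
      rw [Finset.mem_Icc] at hj
      omega
    · intro i _; rfl
  have hval : ∀ i : ℕ, g ((i:ℤ)+1) = ((i + 1 : ℕ) : ℝ) ^ α := by
    intro i
    have h1 : ((i:ℤ)+1).natAbs = i + 1 := by omega
    have h2 : ((i:ℤ)+1).natAbs ⊔ 1 = i + 1 := by omega
    simp only [hg, h2]
  have hg0 : g 0 = 1 := by
    rw [hg]; norm_num
  have hsum : ∑ i ∈ Finset.range (N+1), g (i:ℤ)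
      = 1 + ∑ i ∈ Finset.range N, g ((i:ℤ)+1) := by
    rw [Finset.sum_range_succ' (fun i => g (i:ℤ)) N]
    rw [Nat.cast_zero, hg0, add_comm]
    congr 1
  have hbound : ∑ i ∈ Finset.range N, g ((i:ℤ)+1) ≤ (N : ℝ) ^ (1 + α) / (1 + α) := by
    calc ∑ i ∈ Finset.range N, g ((i:ℤ)+1)
        = ∑ i ∈ Finset.range N, ((i + 1 : ℕ) : ℝ) ^ α := Finset.sum_congr rfl fun i _ => hval i
      _ ≤ (N : ℝ) ^ (1 + α) / (1 + α) := sum_succ_rpow_le hα1 hα0 N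
  have hN1 : (1:ℝ) ≤ (N:ℝ) ^ (1+α) := by
    calc (1:ℝ) = (1:ℝ) ^ (1+α) := (Real.one_rpow _).symm
      _ ≤ (N:ℝ) ^ (1+α) := Real.rpow_le_rpow zero_le_one (by exact_mod_cast hN) h1α.le
  have h2div : 0 < 2 / (1+α) := by positivity
  calc ∑ j ∈ Finset.Icc (-(N:ℤ)) (N:ℤ), g j
      = (∑ j ∈ Finset.Icc (-(N:ℤ)) (-1), g j) + ∑ j ∈ Finset.Icc (0:ℤ) (N:ℤ), g j := by
        rw [hsplit, Finset.sum_union hdisj]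
    _ = 1 + 2 * ∑ i ∈ Finset.range N, g ((i:ℤ)+1) := by
        rw [hneg, hpos, hsum]; ring
    _ ≤ 1 + 2 * ((N : ℝ) ^ (1 + α) / (1 + α)) := by linarith [hbound]
    _ ≤ (1 + 2 / (1+α)) * (N:ℝ) ^ (1+α) := by
        have : 2 * ((N : ℝ) ^ (1 + α) / (1 + α)) = 2 / (1+α) * (N:ℝ) ^ (1+α) := by ring
        rw [this]
        nlinarith [hN1]

lemma sum_proj (x : Fin d → ℤ) (n : ℕ) (i₀ : Fin d) (g : ℤ → ℝ) :
    ∑ y ∈ cube x n, g (y i₀)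
      = ((2 * n + 1 : ℕ) : ℝ) ^ (d - 1) * ∑ j ∈ Finset.Icc (x i₀ - n) (x i₀ + n), g j := by
  classical
  have h := Finset.prod_univ_sum (fun i : Fin d => Finset.Icc (x i - (n:ℤ)) (x i + n))
      (fun i j => if i = i₀ then g j else (1:ℝ))
  have hR : ∀ y : Fin d → ℤ, (∏ i, if i = i₀ then g (y i) else (1:ℝ)) = g (y i₀) := by
    intro y
    rw [Finset.prod_ite_eq' Finset.univ i₀ (fun i => g (y i))]
    simp
  have hL : (∏ i, ∑ j ∈ Finset.Icc (x i - (n:ℤ)) (x i + n), if i = i₀ then g j else (1:ℝ))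
      = (∑ j ∈ Finset.Icc (x i₀ - (n:ℤ)) (x i₀ + n), g j) * ((2 * n + 1 : ℕ) : ℝ) ^ (d - 1) := by
    rw [← Finset.mul_prod_erase Finset.univ _ (Finset.mem_univ i₀)]
    have h1 : (∑ j ∈ Finset.Icc (x i₀ - (n:ℤ)) (x i₀ + n), if i₀ = i₀ then g j else (1:ℝ))
        = ∑ j ∈ Finset.Icc (x i₀ - (n:ℤ)) (x i₀ + n), g j := by
      simp
    rw [h1]
    congr 1
    rw [Finset.prod_congr rfl fun i hi => ?_, Finset.prod_const,
      Finset.card_erase_of_mem (Finset.mem_univ i₀), Finset.card_univ, Fintype.card_fin]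
    have hne : i ≠ i₀ := Finset.ne_of_mem_erase hi
    simp only [if_neg hne, Finset.sum_const, Int.card_Icc, nsmul_eq_mul, mul_one]
    have h2 : (x i + (n:ℤ) + 1 - (x i - n)).toNat = 2 * n + 1 := by omega
    rw [h2]
  have h2 : ∑ y ∈ Fintype.piFinset (fun i => Finset.Icc (x i - (n:ℤ)) (x i + n)), g (y i₀)
      = ∑ y ∈ Fintype.piFinset (fun i => Finset.Icc (x i - (n:ℤ)) (x i + n)),
          ∏ i, if i = i₀ then g (y i) else (1:ℝ) :=
    Finset.sum_congr rfl fun y _ => (hR y).symm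
  rw [cube, h2, ← h, hL, mul_comm]

lemma V_lower (d : ℕ) (hd : 1 ≤ d) (α : ℝ) (x : Fin d → ℤ) (r : ℝ) (hr : 1 ≤ r) :
    (4:ℝ) ^ (-|α|) / 2 * r ^ d * (max ((linf x : ℕ) : ℝ) r) ^ α ≤ V α x r := by
  have hr0 : (0:ℝ) ≤ r := by linarith
  set n := ⌊r⌋₊ with hn
  have hn1 : 1 ≤ n := Nat.le_floor (by exact_mod_cast hr)
  have hnr : (n:ℝ) ≤ r := Nat.floor_le hr0
  have hrn : r < (n:ℝ) + 1 := Nat.lt_floor_add_one r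
  set m := linf x with hm
  set mR : ℝ := ((m : ℕ) : ℝ) with hmR
  have hmR0 : 0 ≤ mR := Nat.cast_nonneg _
  set Mr : ℝ := max mR r with hMrdef
  have hMr1 : (1:ℝ) ≤ Mr := le_max_of_le_right hr
  have hMr0 : (0:ℝ) < Mr := by linarith
  set k := (n+1)/2 with hk
  have hkn : k ≤ n := by omega
  have hk1 : 1 ≤ k := by omega
  have h2k : n ≤ 2 * k := by omega
  have hnR1 : (1:ℝ) ≤ (n:ℝ) := by exact_mod_cast hn1
  obtain ⟨i₀, -, hi₀⟩ := Finset.exists_mem_eq_sup (Finset.univ : Finset (Fin d))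
    ⟨⟨0, hd⟩, Finset.mem_univ _⟩ (fun i => (x i).natAbs)
  have hmi₀ : m = (x i₀).natAbs := hi₀
  set T : Finset (Fin d → ℤ) := Fintype.piFinset (fun i =>
    if i = i₀ then
      (if 0 ≤ x i₀ then Finset.Icc (x i₀ + k) (x i₀ + n) else Finset.Icc (x i₀ - n) (x i₀ - k))
    else Finset.Icc (x i - n) (x i + n)) with hT
  have hTsub : T ⊆ cube x n := by
    rw [hT, cube]
    apply Fintype.piFinset_subset
    intro i
    by_cases h : i = i₀
    · subst h
      split_ifs with h1 h0
      · exact Finset.Icc_subset_Icc (by omega) (by omega)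
      · exact Finset.Icc_subset_Icc (by omega) (by omega)
      · exact subset_rfl
    · simp [h]
  set a := n - k + 1 with ha
  have ha2 : n + 1 ≤ 2 * a := by omega
  have hTcard : T.card = a * (2*n+1)^(d-1) := by
    rw [hT, Fintype.card_piFinset,
      ← Finset.mul_prod_erase Finset.univ _ (Finset.mem_univ i₀)]
    have h1 : (if i₀ = i₀ then
        (if 0 ≤ x i₀ then Finset.Icc (x i₀ + (k:ℤ)) (x i₀ + n) else Finset.Icc (x i₀ - n) (x i₀ - k))
      else Finset.Icc (x i₀ - (n:ℤ)) (x i₀ + n)).card = a := by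
      rw [if_pos rfl]
      split_ifs with h0 <;> (rw [Int.card_Icc]; omega)
    rw [h1]
    congr 1
    rw [Finset.prod_congr rfl fun i hi => ?_, Finset.prod_const,
      Finset.card_erase_of_mem (Finset.mem_univ i₀), Finset.card_univ, Fintype.card_fin]
    have hne : i ≠ i₀ := Finset.ne_of_mem_erase hi
    rw [if_neg hne, Int.card_Icc]
    omega
  have hkey : ∀ y ∈ T, (4:ℝ) ^ (-|α|) * Mr ^ α ≤ nu α y := by
    intro y hy
    have hyc := hTsub hy
    have hyl : linf y ≤ m + n := by
      have h1 : linf (y - x) ≤ n := mem_cube.1 hyc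
      have h2 := linf_add_le (y - x) x
      rw [sub_add_cancel] at h2
      omega
    have hyi₀ : m + k ≤ (y i₀).natAbs := by
      have hmem := Fintype.mem_piFinset.1 hy i₀
      split_ifs at hmem with h1 h0
      · rw [Finset.mem_Icc] at hmem; omega
      · rw [Finset.mem_Icc] at hmem; omega
      · exact absurd rfl h1
    have hylm : m + k ≤ linf y := hyi₀.trans (natAbs_le_linf y i₀)
    set b : ℝ := ((max (linf y) 1 : ℕ) : ℝ) with hb
    have hb_ge : (mR + k : ℝ) ≤ b := by
      have h1 : m + k ≤ max (linf y) 1 := hylm.trans (le_max_left _ _)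
      rw [hb, hmR]
      exact_mod_cast h1
    have hb_le : b ≤ mR + n := by
      have h1 : max (linf y) 1 ≤ m + n := max_le hyl (by omega)
      rw [hb, hmR]
      exact_mod_cast h1
    have hkR : (n:ℝ) ≤ 2 * (k:ℝ) := by exact_mod_cast h2k
    have hb_pos : (0:ℝ) < b := by
      have : (1:ℝ) ≤ mR + k := by
        have : 1 ≤ m + k := by omega
        rw [hmR]; exact_mod_cast this
      linarith
    have hmax_le : Mr ≤ 2 * max mR (n:ℝ) := by
      have h1 : Mr ≤ max mR (2*(n:ℝ)) := max_le_max le_rfl (by linarith)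
      have h2 : max mR (2*(n:ℝ)) ≤ 2 * max mR (n:ℝ) := by
        apply max_le
        · linarith [le_max_left mR (n:ℝ)]
        · linarith [le_max_right mR (n:ℝ)]
      linarith
    have hmaxmn : max mR (n:ℝ) ≤ mR + n := by
      apply max_le <;> [linarith [Nat.cast_nonneg (α := ℝ) n]; linarith]
    have hMr_le_4b : Mr ≤ 4 * b := by
      calc Mr ≤ 2 * max mR (n:ℝ) := hmax_le
        _ ≤ 2 * (mR + n) := by linarith
        _ ≤ 2 * (mR + 2*k) := by linarith
        _ ≤ 4 * (mR + k) := by linarith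
        _ ≤ 4 * b := by linarith
    have hb_le_2Mr : b ≤ 2 * Mr := by
      have h1 : max mR (n:ℝ) ≤ Mr := max_le_max le_rfl hnr
      calc b ≤ mR + n := hb_le
        _ ≤ 2 * max mR (n:ℝ) := by
            have := le_max_left mR (n:ℝ); have := le_max_right mR (n:ℝ); linarith
        _ ≤ 2 * Mr := by linarith
    show (4:ℝ) ^ (-|α|) * Mr ^ α ≤ ((max (linf y) 1 : ℕ) : ℝ) ^ α
    rw [← hb]
    rcases le_or_gt 0 α with h0 | h0
    · rw [abs_of_nonneg h0]
      have hdiv : (4:ℝ) ^ (-α) * Mr ^ α = (Mr/4) ^ α := by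
        rw [Real.div_rpow hMr0.le (by norm_num), Real.rpow_neg (by norm_num)]
        ring
      rw [hdiv]
      exact Real.rpow_le_rpow (by positivity) (by linarith) h0
    · rw [abs_of_neg h0, neg_neg]
      have hmul : (4:ℝ) ^ α * Mr ^ α = (4*Mr) ^ α := by
        rw [Real.mul_rpow (by norm_num) hMr0.le]
      rw [hmul]
      exact Real.rpow_le_rpow_of_nonpos hb_pos (by linarith) h0.le
  have hVr : V α x r = ∑ y ∈ cube x n, nu α y := V_eq_sum α x r hr0
  have h1 : (T.card : ℝ) * ((4:ℝ)^(-|α|) * Mr^α) ≤ ∑ y ∈ T, nu α y := by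
    have := Finset.card_nsmul_le_sum T (fun y => nu α y) ((4:ℝ)^(-|α|) * Mr^α) hkey
    rwa [nsmul_eq_mul] at this
  have h2 : ∑ y ∈ T, nu α y ≤ ∑ y ∈ cube x n, nu α y :=
    Finset.sum_le_sum_of_subset_of_nonneg hTsub (fun y _ _ => nu_nonneg α y)
  have h3 : r ^ d / 2 ≤ (T.card : ℝ) := by
    rw [hTcard, Nat.cast_mul, Nat.cast_pow]
    have haR : r / 2 ≤ (a : ℝ) := by
      have hc : ((n:ℝ)) + 1 ≤ 2 * (a:ℝ) := by exact_mod_cast ha2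
      linarith
    have hbR : r ^ (d-1) ≤ ((2*n+1 : ℕ):ℝ) ^ (d-1) := by
      apply pow_le_pow_left₀ hr0
      push_cast
      linarith
    calc r ^ d / 2 = (r/2) * r ^ (d-1) := by
          conv_lhs => rw [show d = (d-1)+1 from (Nat.succ_pred_eq_of_pos hd).symm]
          rw [pow_succ]
          ring
      _ ≤ (a:ℝ) * ((2*n+1 : ℕ):ℝ) ^ (d-1) :=
          mul_le_mul haR hbR (by positivity) (by positivity)
  have hfac_nonneg : (0:ℝ) ≤ (4:ℝ)^(-|α|) * Mr^α :=
    mul_nonneg (Real.rpow_nonneg (by norm_num) _) (Real.rpow_nonneg hMr0.le _)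
  calc (4:ℝ) ^ (-|α|) / 2 * r ^ d * Mr ^ α
      = (r ^ d / 2) * ((4:ℝ)^(-|α|) * Mr^α) := by ring
    _ ≤ (T.card : ℝ) * ((4:ℝ)^(-|α|) * Mr^α) := mul_le_mul_of_nonneg_right h3 hfac_nonneg
    _ ≤ ∑ y ∈ T, nu α y := h1
    _ ≤ ∑ y ∈ cube x n, nu α y := h2
    _ = V α x r := hVr.symm

lemma V_upper (d : ℕ) (hd : 1 ≤ d) (α : ℝ) (hα : -1 < α) (x : Fin d → ℤ) (r : ℝ) (hr : 1 ≤ r) :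
    V α x r ≤ (3:ℝ)^d * ((2:ℝ)^|α| + (1 + 2/(1+α))) * r ^ d * (max ((linf x : ℕ) : ℝ) r) ^ α := by
  have h1α : (0:ℝ) < 1 + α := by linarith
  have hr0 : (0:ℝ) ≤ r := by linarith
  set n := ⌊r⌋₊ with hn
  have hn1 : 1 ≤ n := Nat.le_floor (by exact_mod_cast hr)
  have hnr : (n:ℝ) ≤ r := Nat.floor_le hr0
  have hrn : r < (n:ℝ) + 1 := Nat.lt_floor_add_one r
  have hnR1 : (1:ℝ) ≤ (n:ℝ) := by exact_mod_cast hn1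
  set m := linf x with hm
  set mR : ℝ := ((m : ℕ) : ℝ) with hmR
  have hmR0 : 0 ≤ mR := Nat.cast_nonneg _
  set Mr : ℝ := max mR r with hMrdef
  have hMr1 : (1:ℝ) ≤ Mr := le_max_of_le_right hr
  have hMr0 : (0:ℝ) < Mr := by linarith
  have hMra_pos : (0:ℝ) < Mr ^ α := Real.rpow_pos_of_pos hMr0 _
  have hVr : V α x r = ∑ y ∈ cube x n, nu α y := V_eq_sum α x r hr0
  have hcardR : ((cube x n).card : ℝ) ≤ (3*r) ^ d := by
    rw [card_cube]
    push_cast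
    apply pow_le_pow_left₀ (by positivity)
    linarith
  have hX0 : (0:ℝ) ≤ r ^ d * Mr ^ α := by positivity
  have h2abs : (0:ℝ) < (2:ℝ)^|α| := Real.rpow_pos_of_pos (by norm_num) _
  have hCc : (0:ℝ) < 1 + 2/(1+α) := by positivity
  have hfinal : ∀ A : ℝ, 0 < A → (A ≤ (2:ℝ)^|α| ∨ A ≤ 1 + 2/(1+α)) →
      V α x r ≤ (3:ℝ)^d * A * r ^ d * Mr ^ α →
      V α x r ≤ (3:ℝ)^d * ((2:ℝ)^|α| + (1 + 2/(1+α))) * r ^ d * Mr ^ α := by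
    intro A hA hAle hV
    apply hV.trans
    have h3d : (0:ℝ) < (3:ℝ)^d := by positivity
    have : A ≤ (2:ℝ)^|α| + (1 + 2/(1+α)) := by
      rcases hAle with h | h <;> linarith
    calc (3:ℝ)^d * A * r ^ d * Mr ^ α = ((3:ℝ)^d * (r ^ d * Mr ^ α)) * A := by ring
      _ ≤ ((3:ℝ)^d * (r ^ d * Mr ^ α)) * ((2:ℝ)^|α| + (1 + 2/(1+α))) := by
          apply mul_le_mul_of_nonneg_left this (by positivity)
      _ = (3:ℝ)^d * ((2:ℝ)^|α| + (1 + 2/(1+α))) * r ^ d * Mr ^ α := by ring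
  rcases le_or_gt 0 α with hα0 | hα0
  · -- α ≥ 0 : every point of the cube has |y| ≤ m + n ≤ 2 Mr
    apply hfinal ((2:ℝ)^|α|) h2abs (Or.inl le_rfl)
    have hkey : ∀ y ∈ cube x n, nu α y ≤ (2:ℝ)^|α| * Mr ^ α := by
      intro y hy
      have hyl : linf y ≤ m + n := by
        have h1 : linf (y - x) ≤ n := mem_cube.1 hy
        have h2 := linf_add_le (y - x) x
        rw [sub_add_cancel] at h2
        omega
      set b : ℝ := ((max (linf y) 1 : ℕ) : ℝ) with hb
      have hb_le : b ≤ mR + n := by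
        have h1 : max (linf y) 1 ≤ m + n := max_le hyl (by omega)
        rw [hb, hmR]
        exact_mod_cast h1
      have hb_le_2Mr : b ≤ 2 * Mr := by
        have h1 : mR ≤ Mr := le_max_left _ _
        have h2 : (n:ℝ) ≤ Mr := hnr.trans (le_max_right _ _)
        linarith
      have hb0 : (0:ℝ) ≤ b := Nat.cast_nonneg _
      show b ^ α ≤ (2:ℝ)^|α| * Mr ^ α
      rw [abs_of_nonneg hα0, ← Real.mul_rpow (by norm_num) hMr0.le]
      exact Real.rpow_le_rpow hb0 hb_le_2Mr hα0
    calc V α x r = ∑ y ∈ cube x n, nu α y := hVr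
      _ ≤ (cube x n).card • ((2:ℝ)^|α| * Mr ^ α) := Finset.sum_le_card_nsmul _ _ _ hkey
      _ = ((cube x n).card : ℝ) * ((2:ℝ)^|α| * Mr ^ α) := by rw [nsmul_eq_mul]
      _ ≤ (3*r)^d * ((2:ℝ)^|α| * Mr ^ α) :=
          mul_le_mul_of_nonneg_right hcardR (by positivity)
      _ = (3:ℝ)^d * (2:ℝ)^|α| * r ^ d * Mr ^ α := by rw [mul_pow]; ring
  · rcases le_or_gt (2*n) m with hcase | hcase
    · -- α < 0 and m ≥ 2n : every point has |y| ≥ m - n ≥ Mr / 2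
      apply hfinal ((2:ℝ)^|α|) h2abs (Or.inl le_rfl)
      have hkey : ∀ y ∈ cube x n, nu α y ≤ (2:ℝ)^|α| * Mr ^ α := by
        intro y hy
        have hyl : m ≤ linf y + n := by
          have h1 : linf (y - x) ≤ n := mem_cube.1 hy
          have h2 := linf_add_le (x - y) y
          rw [sub_add_cancel] at h2
          have h3 : linf (x - y) ≤ n := by
            have h4 : x - y = -(y - x) := by abel
            rw [h4, linf_neg]
            exact h1
          omega
        set b : ℝ := ((max (linf y) 1 : ℕ) : ℝ) with hb
        have hb_ge : ((m - n : ℕ) : ℝ) ≤ b := by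
          have h1 : m - n ≤ max (linf y) 1 := by omega
          rw [hb]
          exact_mod_cast h1
        have hmn_cast : ((m - n : ℕ) : ℝ) = mR - n := by
          rw [hmR]
          have : n ≤ m := by omega
          push_cast [this]
          ring
        have hb_ge' : mR - n ≤ b := by rw [← hmn_cast]; exact hb_ge
        have h2nm : 2*(n:ℝ) ≤ mR := by rw [hmR]; exact_mod_cast hcase
        have hMr_le_2b : Mr ≤ 2 * b := by
          have h1 : r ≤ mR := by linarith
          have h2 : Mr ≤ mR := max_le le_rfl h1
          linarith
        have hb_pos : (0:ℝ) < b := by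
          have : (1:ℝ) ≤ ((max (linf y) 1 : ℕ) : ℝ) := by exact_mod_cast le_max_right (linf y) 1
          rw [hb]; linarith
        show b ^ α ≤ (2:ℝ)^|α| * Mr ^ α
        rw [abs_of_neg hα0]
        have hdiv : (2:ℝ) ^ (-α) * Mr ^ α = (Mr/2) ^ α := by
          rw [Real.div_rpow hMr0.le (by norm_num), Real.rpow_neg (by norm_num)]
          ring
        rw [hdiv]
        exact Real.rpow_le_rpow_of_nonpos (by linarith) (by linarith) hα0.le
      calc V α x r = ∑ y ∈ cube x n, nu α y := hVr
        _ ≤ (cube x n).card • ((2:ℝ)^|α| * Mr ^ α) := Finset.sum_le_card_nsmul _ _ _ hkey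
        _ = ((cube x n).card : ℝ) * ((2:ℝ)^|α| * Mr ^ α) := by rw [nsmul_eq_mul]
        _ ≤ (3*r)^d * ((2:ℝ)^|α| * Mr ^ α) :=
            mul_le_mul_of_nonneg_right hcardR (by positivity)
        _ = (3:ℝ)^d * (2:ℝ)^|α| * r ^ d * Mr ^ α := by rw [mul_pow]; ring
    · -- α < 0 and m < 2n : one-dimensional projection
      apply hfinal (1 + 2/(1+α)) hCc (Or.inr le_rfl)
      obtain ⟨i₀, -, hi₀⟩ := Finset.exists_mem_eq_sup (Finset.univ : Finset (Fin d))
        ⟨⟨0, hd⟩, Finset.mem_univ _⟩ (fun i => (x i).natAbs)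
      have hmi₀ : m = (x i₀).natAbs := hi₀
      set g : ℤ → ℝ := fun j => ((max (j.natAbs) 1 : ℕ) : ℝ) ^ α with hg
      have hg_nonneg : ∀ j : ℤ, 0 ≤ g j := fun j => Real.rpow_nonneg (Nat.cast_nonneg _) _
      have hkey : ∀ y ∈ cube x n, nu α y ≤ g (y i₀) := by
        intro y _
        have h1 : max ((y i₀).natAbs) 1 ≤ max (linf y) 1 := by
          have := natAbs_le_linf y i₀
          omega
        have h2 : (0:ℝ) < ((max ((y i₀).natAbs) 1 : ℕ) : ℝ) := by
          have : (1:ℕ) ≤ max ((y i₀).natAbs) 1 := le_max_right _ _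
          exact_mod_cast Nat.lt_of_lt_of_le Nat.zero_lt_one this
        exact Real.rpow_le_rpow_of_nonpos h2 (by exact_mod_cast h1) hα0.le
      have hproj := sum_proj x n i₀ g
      have hsubset : Finset.Icc (x i₀ - (n:ℤ)) (x i₀ + n) ⊆ Finset.Icc (-(3*n:ℕ):ℤ) ((3*n:ℕ):ℤ) := by
        apply Finset.Icc_subset_Icc <;> (push_cast; omega)
      have h1d : ∑ j ∈ Finset.Icc (x i₀ - (n:ℤ)) (x i₀ + n), g j
          ≤ ∑ j ∈ Finset.Icc (-(3*n:ℕ):ℤ) ((3*n:ℕ):ℤ), g j :=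
        Finset.sum_le_sum_of_subset_of_nonneg hsubset (fun j _ _ => hg_nonneg j)
      have h1d2 : ∑ j ∈ Finset.Icc (-(3*n:ℕ):ℤ) ((3*n:ℕ):ℤ), g j
          ≤ (1 + 2/(1+α)) * ((3*n:ℕ):ℝ) ^ (1+α) :=
        sum_g_Icc_le hα hα0.le (3*n) (by omega)
      have h3n_pos : (0:ℝ) < ((3*n:ℕ):ℝ) := by
        push_cast
        linarith
      have hcube_le : ∑ y ∈ cube x n, nu α y
          ≤ ((2 * n + 1 : ℕ) : ℝ) ^ (d - 1) * ((1 + 2/(1+α)) * ((3*n:ℕ):ℝ) ^ (1+α)) := by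
        calc ∑ y ∈ cube x n, nu α y ≤ ∑ y ∈ cube x n, g (y i₀) := Finset.sum_le_sum hkey
          _ = ((2 * n + 1 : ℕ) : ℝ) ^ (d - 1) * ∑ j ∈ Finset.Icc (x i₀ - (n:ℤ)) (x i₀ + n), g j :=
              hproj
          _ ≤ ((2 * n + 1 : ℕ) : ℝ) ^ (d - 1) * ((1 + 2/(1+α)) * ((3*n:ℕ):ℝ) ^ (1+α)) := by
              apply mul_le_mul_of_nonneg_left (h1d.trans h1d2) (by positivity)
      have hsplit : ((3*n:ℕ):ℝ) ^ (1+α) = ((3*n:ℕ):ℝ) * ((3*n:ℕ):ℝ) ^ α := by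
        rw [Real.rpow_add h3n_pos, Real.rpow_one]
      have hCc0 : (0:ℝ) ≤ 1 + 2/(1+α) := hCc.le
      have hstep1 : ((2 * n + 1 : ℕ) : ℝ) ^ (d - 1) * ((3*n:ℕ):ℝ) ≤ (3*r) ^ d := by
        have h21 : ((2 * n + 1 : ℕ) : ℝ) ≤ 3*(n:ℝ) := by push_cast; linarith
        have h21' : ((2 * n + 1 : ℕ) : ℝ) ^ (d-1) ≤ (3*(n:ℝ)) ^ (d-1) :=
          pow_le_pow_left₀ (Nat.cast_nonneg _) h21 _
        have h3nr : ((3*n:ℕ):ℝ) = 3*(n:ℝ) := by push_cast; ring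
        calc ((2 * n + 1 : ℕ) : ℝ) ^ (d - 1) * ((3*n:ℕ):ℝ)
            ≤ (3*(n:ℝ)) ^ (d-1) * (3*(n:ℝ)) := by
              rw [h3nr]
              exact mul_le_mul_of_nonneg_right h21' (by positivity)
          _ = (3*(n:ℝ)) ^ d := by
              conv_rhs => rw [show d = (d-1)+1 from (Nat.succ_pred_eq_of_pos hd).symm]
              rw [pow_succ]
          _ ≤ (3*r) ^ d := pow_le_pow_left₀ (by positivity) (by linarith) _
      have hstep2 : ((3*n:ℕ):ℝ) ^ α ≤ Mr ^ α := by
        apply Real.rpow_le_rpow_of_nonpos hMr0 _ hα0.le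
        have h1 : mR ≤ 2*(n:ℝ) := by
          rw [hmR]
          exact_mod_cast hcase.le
        have h2 : r ≤ 2*(n:ℝ) := by linarith
        push_cast
        apply max_le <;> push_cast at h1 ⊢ <;> linarith
      calc V α x r = ∑ y ∈ cube x n, nu α y := hVr
        _ ≤ ((2 * n + 1 : ℕ) : ℝ) ^ (d - 1) * ((1 + 2/(1+α)) * ((3*n:ℕ):ℝ) ^ (1+α)) := hcube_le
        _ = (1 + 2/(1+α)) * ((((2 * n + 1 : ℕ) : ℝ) ^ (d - 1) * ((3*n:ℕ):ℝ)) * ((3*n:ℕ):ℝ) ^ α) := by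
            rw [hsplit]; ring
        _ ≤ (1 + 2/(1+α)) * ((3*r) ^ d * Mr ^ α) := by
            apply mul_le_mul_of_nonneg_left _ hCc0
            apply mul_le_mul hstep1 hstep2 (Real.rpow_nonneg h3n_pos.le _) (by positivity)
        _ = (3:ℝ)^d * (1 + 2/(1+α)) * r ^ d * Mr ^ α := by rw [mul_pow]; ring

end Aux

/-- There are constants `c₁, c₂ > 0`, depending only on `α` and `d`,
such that for every `x ∈ ℤ^d` and every real `r ≥ 1`,
`c₁ r^d (max(|x|,r))^α ≤ V(x,r) ≤ c₂ r^d (max(|x|,r))^α`. -/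
theorem ball_volume (d : ℕ) (hd : 1 ≤ d) (α : ℝ) (hα : -1 < α) :
    ∃ c₁ c₂ : ℝ, 0 < c₁ ∧ 0 < c₂ ∧
      ∀ (x : Fin d → ℤ) (r : ℝ), 1 ≤ r →
        c₁ * r ^ d * (max ((linf x : ℕ) : ℝ) r) ^ α ≤ V α x r ∧
          V α x r ≤ c₂ * r ^ d * (max ((linf x : ℕ) : ℝ) r) ^ α := by
  have h1α : (0:ℝ) < 1 + α := by linarith
  refine ⟨(4:ℝ) ^ (-|α|) / 2, (3:ℝ)^d * ((2:ℝ)^|α| + (1 + 2/(1+α))), ?_, ?_, fun x r hr =>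
    ⟨V_lower d hd α x r hr, V_upper d hd α hα x r hr⟩⟩
  · positivity
  · have h2abs : (0:ℝ) < (2:ℝ)^|α| := Real.rpow_pos_of_pos (by norm_num) _
    have hCc : (0:ℝ) < 1 + 2/(1+α) := by positivity
    have h3d : (0:ℝ) < (3:ℝ)^d := by positivity
    apply mul_pos h3d
    linarith
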